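/- arXiv:1808.04115 — 2 statements merged into one kernel-verified Lean document; each statement's English description precedes it below -/
import Mathlib

section
/- Assume q = 2m and let 1 ≤ i < j ≤ m. The unit 2-vectors ρ_{ij}^∓ = (1/√2)(e_{2i−1} ∧ e_{2j} ∓ e_{2i} ∧ e_{2j−1}) are eigenvectors of R_ext with R_ext(ρ_{ij}^∓) = ± b_i b_j ρ_{ij}^∓ (i.e. R_ext ρ_{ij}^− = b_i b_j ρ_{ij}^− and R_ext ρ_{ij}^+ = −b_i b_j ρ_{ij}^+). -/
open scoped BigOperators

namespace Paper

noncomputable section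

/-- Coefficients of exterior forms w.r.t. the fixed orthonormal basis `e₁,…,e_q` of `V = ℝ^q`:
a form is identified with its family of coefficients indexed by subsets of `Fin q`. -/
abbrev Ext (q : ℕ) := Finset (Fin q) → ℝ

variable {q : ℕ}

/-- `(-1)^{#{j ∈ s | j < i}}` -/
def sgn (i : Fin q) (s : Finset (Fin q)) : ℝ := (-1 : ℝ) ^ (s.filter fun j => j < i).card

/-- Exterior multiplication by the basis vector `e_i`. -/
def wB (i : Fin q) (ω : Ext q) : Ext q := fun s =>
  if i ∈ s then sgn i (s.erase i) * ω (s.erase i) else 0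

/-- Interior product (contraction) with the basis vector `e_i`. -/
def iB (i : Fin q) (ω : Ext q) : Ext q := fun s =>
  if i ∈ s then 0 else sgn i s * ω (insert i s)

/-- The basis monomial `e_{i₁} ∧ ⋯ ∧ e_{i_p}`, for `s = {i₁ < ⋯ < i_p}`. -/
def bF (s : Finset (Fin q)) : Ext q := fun t => if t = s then 1 else 0

/-- The basis vector `e_i` of `V = ℝ^q`. -/
def eB (i : Fin q) : Fin q → ℝ := Pi.single i 1

/-- Exterior multiplication by the vector `X ∈ V`. -/
def wV (X : Fin q → ℝ) (ω : Ext q) : Ext q := ∑ i, X i • wB i ω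

/-- Interior product with the vector `X ∈ V`. -/
def iV (X : Fin q → ℝ) (ω : Ext q) : Ext q := ∑ i, X i • iB i ω

/-- Clifford multiplication `X · ω = X ∧ ω − X ⌟ ω` of a vector with a form. -/
def clV (X : Fin q → ℝ) (ω : Ext q) : Ext q := wV X ω - iV X ω

/-- Clifford multiplication `e_{i₁} · e_{i₂} ⋯ e_{i_p} · ω` for `s = {i₁ < ⋯ < i_p}`. -/
def clB (s : Finset (Fin q)) (ω : Ext q) : Ext q :=
  (Finset.sort s (· ≤ ·)).foldr (fun i τ => clV (eB i) τ) ω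

/-- Clifford multiplication of two forms. -/
def clM (ω₁ ω₂ : Ext q) : Ext q := ∑ s : Finset (Fin q), ω₁ s • clB s ω₂

/-- The bracket `[ω₁, ω₂] = ω₁ · ω₂ − ω₂ · ω₁`. -/
def brkt (ω₁ ω₂ : Ext q) : Ext q := clM ω₁ ω₂ - clM ω₂ ω₁

/-- Exterior multiplication by the monomial `e_{i₁} ∧ ⋯ ∧ e_{i_p}`. -/
def wBs (s : Finset (Fin q)) (ω : Ext q) : Ext q :=
  (Finset.sort s (· ≤ ·)).foldr (fun i τ => wB i τ) ω

/-- The wedge product of two forms. -/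
def wM (ω₁ ω₂ : Ext q) : Ext q := ∑ s : Finset (Fin q), ω₁ s • wBs s ω₂

/-- The inner product on forms, for which the basis monomials are orthonormal. -/
def ip (ω φ : Ext q) : ℝ := ∑ s : Finset (Fin q), ω s * φ s

/-- `ω` is a form of (pure) degree `p`. -/
def homog (p : ℕ) (ω : Ext q) : Prop := ∀ s : Finset (Fin q), s.card ≠ p → ω s = 0

/-- The inner product of two vectors of `V = ℝ^q`. -/
def dotP (X Y : Fin q → ℝ) : ℝ := ∑ i, X i * Y i

/-- A vector of `V` regarded as a 1-form. -/
def oneF (X : Fin q → ℝ) : Ext q := ∑ i, X i • bF {i}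

/-- The wedge `X ∧ Y` of two vectors. -/
def w2 (X Y : Fin q → ℝ) : Ext q := wV X (oneF Y)

/-- Two-element subsets, indexing the canonical orthonormal basis of `Λ²V`. -/
def twoSets (q : ℕ) : Finset (Finset (Fin q)) := Finset.univ.filter fun s => s.card = 2

/-- The Bochner operator quadratic form `⟨B_R^{[p]} ω, φ⟩ =
(1/4) Σ_{r,s} ⟨R ψ_r, ψ_s⟩ ⟨[ψ_r,ω],[ψ_s,φ]⟩`, computed in the canonical
orthonormal basis `{e_i ∧ e_j}_{i<j}` of `Λ²V`. -/
def Bform (R : Ext q →ₗ[ℝ] Ext q) (ω φ : Ext q) : ℝ :=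
  (1 / 4 : ℝ) * ∑ s ∈ twoSets q, ∑ t ∈ twoSets q,
    ip (R (bF s)) (bF t) * ip (brkt (bF s) ω) (brkt (bF t) φ)

/-! ### Auxiliary lemmas -/

lemma ip_bF_right (ω : Ext q) (s : Finset (Fin q)) : ip ω (bF s) = ω s := by
  unfold ip bF
  simp [mul_ite, mul_one, mul_zero, Finset.sum_ite_eq']

lemma ip_bF_bF (s u : Finset (Fin q)) : ip (bF s) (bF u) = if u = s then 1 else 0 := by
  rw [ip_bF_right]; rfl

lemma ip_smul_left (x : ℝ) (ω φ : Ext q) : ip (x • ω) φ = x * ip ω φ := by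
  simp [ip, Finset.mul_sum, mul_assoc]

lemma ip_smul_right (x : ℝ) (ω φ : Ext q) : ip ω (x • φ) = x * ip ω φ := by
  simp [ip, Finset.mul_sum, mul_left_comm]

lemma ip_add_left (ω₁ ω₂ φ : Ext q) : ip (ω₁ + ω₂) φ = ip ω₁ φ + ip ω₂ φ := by
  simp [ip, add_mul, Finset.sum_add_distrib]

lemma ip_add_right (ω φ₁ φ₂ : Ext q) : ip ω (φ₁ + φ₂) = ip ω φ₁ + ip ω φ₂ := by
  simp [ip, mul_add, Finset.sum_add_distrib]

lemma ip_sub_left (ω₁ ω₂ φ : Ext q) : ip (ω₁ - ω₂) φ = ip ω₁ φ - ip ω₂ φ := by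
  simp [ip, sub_mul, Finset.sum_sub_distrib]

lemma ip_sub_right (ω φ₁ φ₂ : Ext q) : ip ω (φ₁ - φ₂) = ip ω φ₁ - ip ω φ₂ := by
  simp [ip, mul_sub, Finset.sum_sub_distrib]

lemma oneF_eB (l : Fin q) : oneF (eB l) = bF {l} := by
  unfold oneF eB
  rw [Fintype.sum_eq_single l (fun i hi => by simp [Pi.single_apply, hi.symm])]
  simp

lemma wV_eB (k : Fin q) (ω : Ext q) : wV (eB k) ω = wB k ω := by
  unfold wV eB
  rw [Fintype.sum_eq_single k (fun i hi => by simp [Pi.single_apply, hi.symm])]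
  simp

lemma w2eB (k l : Fin q) (hkl : k < l) : w2 (eB k) (eB l) = bF {k, l} := by
  have hne : k ≠ l := ne_of_lt hkl
  unfold w2
  rw [oneF_eB, wV_eB]
  funext s
  simp only [wB, bF]
  by_cases hks : k ∈ s
  · rw [if_pos hks]
    have hkey : s.erase k = {l} ↔ s = {k, l} := by
      constructor
      · intro hE
        have := Finset.insert_erase hks
        rw [hE] at this
        exact this.symm
      · intro hE
        subst hE
        exact Finset.erase_insert (by simp [hne])
    by_cases hs : s = {k, l}
    · rw [if_pos (hkey.mpr hs), if_pos hs, hkey.mpr hs]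
      have : sgn k ({l} : Finset (Fin q)) = 1 := by
        unfold sgn
        rw [Finset.filter_singleton, if_neg (by exact fun hc => absurd (lt_trans hc hkl) (lt_irrefl _))]
        simp
      rw [this, mul_one]
    · rw [if_neg (fun hc => hs (hkey.mp hc)), if_neg hs, mul_zero]
  · rw [if_neg hks, if_neg (fun hc => hks (by rw [hc]; simp))]

lemma pair_eq_pair {k l a c : Fin q} (hkl : k < l) (hac : a < c) :
    ({k, l} : Finset (Fin q)) = {a, c} ↔ k = a ∧ l = c := by
  constructor
  · intro hEq
    have hk : k = a ∨ k = c := by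
      have : k ∈ ({a, c} : Finset (Fin q)) := by rw [← hEq]; simp
      simpa using this
    have hl : l = a ∨ l = c := by
      have : l ∈ ({a, c} : Finset (Fin q)) := by rw [← hEq]; simp
      simpa using this
    have hkl' := Fin.lt_def.mp hkl
    have hac' := Fin.lt_def.mp hac
    simp only [Fin.ext_iff] at hk hl ⊢
    omega
  · rintro ⟨rfl, rfl⟩; rfl

lemma dotP_eB (a c : Fin q) : dotP (eB a) (eB c) = if a = c then 1 else 0 := by
  unfold dotP eB
  rw [Fintype.sum_eq_single a (fun i hi => by simp [Pi.single_apply, hi.symm])]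
  simp [Pi.single_apply, eq_comm]

lemma dotP_smul_left (x : ℝ) (X Y : Fin q → ℝ) : dotP (x • X) Y = x * dotP X Y := by
  simp [dotP, Finset.mul_sum, mul_assoc]

lemma ite_zero_mul_ite_zero {P Q : Prop} [Decidable P] [Decidable Q] (x y : ℝ) :
    (if P then x else 0) * (if Q then y else 0) = if P ∧ Q then x * y else 0 := by
  split_ifs <;> simp_all

lemma homog_two_ext {η φ : Ext q} (hη : homog 2 η) (hφ : homog 2 φ)
    (hc : ∀ k l : Fin q, k < l → ip η (bF {k, l}) = ip φ (bF {k, l})) : η = φ := by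
  funext s
  by_cases h2 : s.card = 2
  · obtain ⟨x, y, hxy, rfl⟩ := Finset.card_eq_two.mp h2
    rcases lt_or_gt_of_ne hxy with hlt | hlt
    · have := hc x y hlt
      rwa [ip_bF_right, ip_bF_right] at this
    · have := hc y x hlt
      rw [ip_bF_right, ip_bF_right] at this
      rw [Finset.pair_comm x y]
      exact this
  · rw [hη s h2, hφ s h2]

/-- For the O'Neill tensor `h` in canonical form on `V = ℝ^{2m}` and the
exterior curvature operator `R_ext`, for `i < j` the unit 2-vectors
`ρ_{ij}^∓ = (1/√2)(e_{2i−1}∧e_{2j} ∓ e_{2i}∧e_{2j−1})` are eigenvectors of `R_ext` with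
`R_ext ρ_{ij}^− = b_i b_j ρ_{ij}^−` and `R_ext ρ_{ij}^+ = −b_i b_j ρ_{ij}^+`.
(Indices are shifted: paper's `e_k` is `eB ⟨k-1, _⟩`.) -/
theorem statement_7 (m : ℕ) (hm : 1 ≤ m)
    (h : (Fin (2 * m) → ℝ) →ₗ[ℝ] (Fin (2 * m) → ℝ)) (b : Fin m → ℝ)
    (hcan : ∀ k : Fin m,
      h (eB ⟨2 * (k : ℕ), by have := k.isLt; omega⟩)
          = b k • eB ⟨2 * (k : ℕ) + 1, by have := k.isLt; omega⟩ ∧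
        h (eB ⟨2 * (k : ℕ) + 1, by have := k.isLt; omega⟩)
          = (-(b k)) • eB ⟨2 * (k : ℕ), by have := k.isLt; omega⟩)
    (hord : ∀ k l : Fin m, k ≤ l → |b k| ≤ |b l|)
    (Rext : Ext (2 * m) →ₗ[ℝ] Ext (2 * m))
    (hR2 : ∀ η : Ext (2 * m), homog 2 η → homog 2 (Rext η))
    (hRf : ∀ X Y Z W : Fin (2 * m) → ℝ,
      ip (Rext (w2 X Y)) (w2 Z W)
        = 2 * dotP (h X) Y * dotP (h Z) W - dotP (h Y) Z * dotP (h X) W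
            - dotP (h Z) X * dotP (h Y) W)
    (i j : Fin m) (hij : i < j)
    (ρp ρm : Ext (2 * m))
    (hρp : ρp = (Real.sqrt 2)⁻¹ •
      (w2 (eB ⟨2 * (i : ℕ), by have := i.isLt; omega⟩)
            (eB ⟨2 * (j : ℕ) + 1, by have := j.isLt; omega⟩)
        + w2 (eB ⟨2 * (i : ℕ) + 1, by have := i.isLt; omega⟩)
            (eB ⟨2 * (j : ℕ), by have := j.isLt; omega⟩)))
    (hρm : ρm = (Real.sqrt 2)⁻¹ •
      (w2 (eB ⟨2 * (i : ℕ), by have := i.isLt; omega⟩)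
            (eB ⟨2 * (j : ℕ) + 1, by have := j.isLt; omega⟩)
        - w2 (eB ⟨2 * (i : ℕ) + 1, by have := i.isLt; omega⟩)
            (eB ⟨2 * (j : ℕ), by have := j.isLt; omega⟩))) :
    ip ρp ρp = 1 ∧ ip ρm ρm = 1 ∧
      Rext ρm = (b i * b j) • ρm ∧ Rext ρp = (-(b i * b j)) • ρp := by
  have him : (i:ℕ) < m := i.isLt
  have hjm : (j:ℕ) < m := j.isLt
  have hij' : (i:ℕ) < (j:ℕ) := hij
  -- dot products with basis vectors
  have hL0 : ∀ (t : Fin m) (l : Fin (2*m)),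
      dotP (h (eB ⟨2*(t:ℕ), by have := t.isLt; omega⟩)) (eB l)
        = if (l:ℕ) = 2*(t:ℕ)+1 then b t else 0 := by
    intro t l
    rw [(hcan t).1, dotP_smul_left, dotP_eB]
    have hiff : ((⟨2*(t:ℕ)+1, by have := t.isLt; omega⟩ : Fin (2*m)) = l)
        ↔ ((l:ℕ) = 2*(t:ℕ)+1) := by
      rw [Fin.ext_iff, Fin.val_mk]; omega
    simp only [hiff, mul_ite, mul_one, mul_zero]
  have hL1 : ∀ (t : Fin m) (l : Fin (2*m)),
      dotP (h (eB ⟨2*(t:ℕ)+1, by have := t.isLt; omega⟩)) (eB l)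
        = if (l:ℕ) = 2*(t:ℕ) then -(b t) else 0 := by
    intro t l
    rw [(hcan t).2, dotP_smul_left, dotP_eB]
    have hiff : ((⟨2*(t:ℕ), by have := t.isLt; omega⟩ : Fin (2*m)) = l)
        ↔ ((l:ℕ) = 2*(t:ℕ)) := by
      rw [Fin.ext_iff, Fin.val_mk]; omega
    simp only [hiff, mul_ite, mul_one, mul_zero]
  have hG0 : ∀ (k : Fin (2*m)) (t : Fin m),
      dotP (h (eB k)) (eB ⟨2*(t:ℕ), by have := t.isLt; omega⟩)
        = if (k:ℕ) = 2*(t:ℕ)+1 then -(b t) else 0 := by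
    intro k t
    rcases Nat.even_or_odd (k:ℕ) with ⟨u, hu⟩ | ⟨u, hu⟩
    · have hum : u < m := by have := k.isLt; omega
      have hk : k = ⟨2*((⟨u, hum⟩ : Fin m):ℕ), by simp; omega⟩ := by
        rw [Fin.ext_iff]; simp; omega
      rw [hk, hL0 ⟨u, hum⟩]
      simp only [Fin.val_mk]
      split_ifs <;> first | rfl | (exfalso; omega)
    · have hum : u < m := by have := k.isLt; omega
      have hk : k = ⟨2*((⟨u, hum⟩ : Fin m):ℕ)+1, by simp; omega⟩ := by
        rw [Fin.ext_iff]; simp; omega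
      rw [hk, hL1 ⟨u, hum⟩]
      simp only [Fin.val_mk]
      have htu : (t:ℕ) = u → (⟨u, hum⟩ : Fin m) = t := fun ht => by
        rw [Fin.ext_iff]; simp [ht]
      split_ifs with h1 h2 <;> first | (exfalso; omega) | (rw [htu (by omega)]) | rfl
  have hG1 : ∀ (k : Fin (2*m)) (t : Fin m),
      dotP (h (eB k)) (eB ⟨2*(t:ℕ)+1, by have := t.isLt; omega⟩)
        = if (k:ℕ) = 2*(t:ℕ) then b t else 0 := by
    intro k t
    rcases Nat.even_or_odd (k:ℕ) with ⟨u, hu⟩ | ⟨u, hu⟩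
    · have hum : u < m := by have := k.isLt; omega
      have hk : k = ⟨2*((⟨u, hum⟩ : Fin m):ℕ), by simp; omega⟩ := by
        rw [Fin.ext_iff]; simp; omega
      rw [hk, hL0 ⟨u, hum⟩]
      simp only [Fin.val_mk]
      have htu : (t:ℕ) = u → (⟨u, hum⟩ : Fin m) = t := fun ht => by
        rw [Fin.ext_iff]; simp [ht]
      split_ifs with h1 h2 <;> first | (exfalso; omega) | (rw [htu (by omega)]) | rfl
    · have hum : u < m := by have := k.isLt; omega
      have hk : k = ⟨2*((⟨u, hum⟩ : Fin m):ℕ)+1, by simp; omega⟩ := by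
        rw [Fin.ext_iff]; simp; omega
      rw [hk, hL1 ⟨u, hum⟩]
      simp only [Fin.val_mk]
      split_ifs <;> first | rfl | (exfalso; omega)
  -- set up the two basis 2-forms
  have pA : 2*(i:ℕ) < 2*m := by omega
  have pA' : 2*(i:ℕ)+1 < 2*m := by omega
  have pC : 2*(j:ℕ) < 2*m := by omega
  have pC' : 2*(j:ℕ)+1 < 2*m := by omega
  have hlt1 : (⟨2*(i:ℕ), pA⟩ : Fin (2*m)) < ⟨2*(j:ℕ)+1, pC'⟩ := by
    rw [Fin.lt_def]; simp only [Fin.val_mk]; omega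
  have hlt2 : (⟨2*(i:ℕ)+1, pA'⟩ : Fin (2*m)) < ⟨2*(j:ℕ), pC⟩ := by
    rw [Fin.lt_def]; simp only [Fin.val_mk]; omega
  have e1 := w2eB _ _ hlt1
  have e2 := w2eB _ _ hlt2
  rw [e1, e2] at hρp hρm
  set S1 : Finset (Fin (2*m)) := {⟨2*(i:ℕ), pA⟩, ⟨2*(j:ℕ)+1, pC'⟩} with hS1
  set S2 : Finset (Fin (2*m)) := {⟨2*(i:ℕ)+1, pA'⟩, ⟨2*(j:ℕ), pC⟩} with hS2
  have hS1card : S1.card = 2 := Finset.card_pair (Fin.ne_of_val_ne (by simp only [Fin.val_mk]; omega))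
  have hS2card : S2.card = 2 := Finset.card_pair (Fin.ne_of_val_ne (by simp only [Fin.val_mk]; omega))
  have hS12 : S1 ≠ S2 := by
    intro hE
    rw [pair_eq_pair hlt1 hlt2] at hE
    have := hE.1
    rw [Fin.ext_iff] at this
    simp only [Fin.val_mk] at this
    omega
  have hS21 : S2 ≠ S1 := hS12.symm
  have homS1 : homog 2 (bF S1) := by
    intro s hs
    simp only [bF]
    rw [if_neg]
    rintro rfl
    exact hs hS1card
  have homS2 : homog 2 (bF S2) := by
    intro s hs
    simp only [bF]
    rw [if_neg]
    rintro rfl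
    exact hs hS2card
  have hom_p : homog 2 ((Real.sqrt 2)⁻¹ • (bF S1 + bF S2)) := by
    intro s hs
    simp only [Pi.smul_apply, Pi.add_apply, smul_eq_mul, homS1 s hs, homS2 s hs,
      add_zero, mul_zero]
  have hom_m : homog 2 ((Real.sqrt 2)⁻¹ • (bF S1 - bF S2)) := by
    intro s hs
    simp only [Pi.smul_apply, Pi.sub_apply, smul_eq_mul, homS1 s hs, homS2 s hs,
      sub_zero, mul_zero]
  have hs2 : Real.sqrt 2 * Real.sqrt 2 = 2 := Real.mul_self_sqrt (by norm_num)
  have hs0 : Real.sqrt 2 ≠ 0 := by positivity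
  have cA1 : (2*(j:ℕ)+1 = 2*(i:ℕ)+1) ↔ False := by rw [iff_false]; omega
  have cA2 : (2*(j:ℕ) = 2*(i:ℕ)) ↔ False := by rw [iff_false]; omega
  have cB1 : ∀ {k l : Fin (2*m)}, (k:ℕ) < (l:ℕ) →
      (((k:ℕ) = 2*(j:ℕ) ∧ (l:ℕ) = 2*(i:ℕ)+1) ↔ False) := by
    intro k l hkl'; rw [iff_false]; rintro ⟨h1, h2⟩; omega
  have cB2 : ∀ {k l : Fin (2*m)}, (k:ℕ) < (l:ℕ) →
      (((k:ℕ) = 2*(j:ℕ)+1 ∧ (l:ℕ) = 2*(i:ℕ)) ↔ False) := by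
    intro k l hkl'; rw [iff_false]; rintro ⟨h1, h2⟩; omega
  refine ⟨?_, ?_, ?_, ?_⟩
  · -- ‖ρp‖ = 1
    rw [hρp]
    simp only [ip_smul_left, ip_smul_right, ip_add_left, ip_add_right, ip_bF_bF,
      if_pos rfl, if_neg hS12, if_neg hS21]
    field_simp
    norm_num [Real.sq_sqrt]
  · -- ‖ρm‖ = 1
    rw [hρm]
    simp only [ip_smul_left, ip_smul_right, ip_sub_left, ip_sub_right, ip_bF_bF,
      if_pos rfl, if_neg hS12, if_neg hS21]
    field_simp
    norm_num [Real.sq_sqrt]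
  · -- Rext ρm = (b i * b j) • ρm
    rw [hρm]
    refine homog_two_ext (hR2 _ hom_m)
      (fun s hs => by simp only [Pi.smul_apply, smul_eq_mul, hom_m s hs, mul_zero]) ?_
    intro k l hkl
    have hkl' : (k:ℕ) < (l:ℕ) := hkl
    conv_lhs => rw [map_smul, map_sub, ← e1, ← e2, ← w2eB k l hkl]
    simp only [ip_smul_left, ip_sub_left, hRf, ip_bF_bF, Pi.smul_apply, Pi.sub_apply,
      smul_eq_mul]
    simp only [hL0, hL1, hG0, hG1]
    simp only [hS1, hS2, pair_eq_pair hkl hlt1, pair_eq_pair hkl hlt2, Fin.ext_iff, Fin.val_mk]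
    simp only [cA1, cA2, if_false, mul_zero, zero_mul, ite_zero_mul_ite_zero,
      cB1 hkl', cB2 hkl']
    split_ifs <;> first | ring | (exfalso; omega)
  · -- Rext ρp = -(b i * b j) • ρp
    rw [hρp]
    refine homog_two_ext (hR2 _ hom_p)
      (fun s hs => by simp only [Pi.smul_apply, smul_eq_mul, hom_p s hs, mul_zero]) ?_
    intro k l hkl
    have hkl' : (k:ℕ) < (l:ℕ) := hkl
    conv_lhs => rw [map_smul, map_add, ← e1, ← e2, ← w2eB k l hkl]
    simp only [ip_smul_left, ip_add_left, hRf, ip_bF_bF, Pi.smul_apply, Pi.add_apply,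
      smul_eq_mul]
    simp only [hL0, hL1, hG0, hG1]
    simp only [hS1, hS2, pair_eq_pair hkl hlt1, pair_eq_pair hkl hlt2, Fin.ext_iff, Fin.val_mk]
    simp only [cA1, cA2, if_false, mul_zero, zero_mul, ite_zero_mul_ite_zero,
      cB1 hkl', cB2 hkl']
    split_ifs <;> first | ring | (exfalso; omega)

end
end Paper
end

section
/- Let i < j be indices and set θ_{ij}^± = (1/√2)(e_{2i−1} ∧ e_{2j−1} ± e_{2i} ∧ e_{2j}) and ρ_{ij}^∓ = (1/√2)(e_{2i−1} ∧ e_{2j} ∓ e_{2i} ∧ e_{2j−1}). Suppose a p-form ω on V satisfies [θ_{ij}^+, ω] = [θ_{ij}^−, ω] = [ρ_{ij}^+, ω] = [ρ_{ij}^−, ω] = 0. Then there exist forms ω₁ (of degree p−4) and ω₂ (of degree p) satisfying e_{2i−1}⌟ω₁ = e_{2i}⌟ω₁ = e_{2j−1}⌟ω₁ = e_{2j}⌟ω₁ = 0 and e_{2i−1}⌟ω₂ = e_{2i}⌟ω₂ = e_{2j−1}⌟ω₂ = e_{2j}⌟ω₂ = 0, such that ω = e_{2i−1} ∧ e_{2i}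 ∧ e_{2j−1} ∧ e_{2j} ∧ ω₁ + ω₂. -/
open scoped BigOperators

namespace Paper

noncomputable section

variable {q : ℕ}

lemma sgn_insert' (i k : Fin q) (B : Finset (Fin q)) (hk : k ∉ B) :
    sgn i (insert k B) = (if k < i then (-1:ℝ) else 1) * sgn i B := by
  unfold sgn
  rw [Finset.filter_insert]
  split_ifs with h
  · rw [Finset.card_insert_of_notMem (by simp [hk]), pow_succ]
    ring
  · ring

lemma sgn_sq (i : Fin q) (s : Finset (Fin q)) : sgn i s * sgn i s = 1 := by
  unfold sgn
  rw [← pow_add, ← two_mul, pow_mul]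
  norm_num

lemma wB_add (i : Fin q) (φ ψ : Ext q) : wB i (φ + ψ) = wB i φ + wB i ψ := by
  funext s; simp only [wB, Pi.add_apply]; split_ifs <;> ring

lemma wB_smul (i : Fin q) (r : ℝ) (φ : Ext q) : wB i (r • φ) = r • wB i φ := by
  funext s; simp only [wB, Pi.smul_apply, smul_eq_mul]; split_ifs <;> ring

lemma iB_add (i : Fin q) (φ ψ : Ext q) : iB i (φ + ψ) = iB i φ + iB i ψ := by
  funext s; simp only [iB, Pi.add_apply]; split_ifs <;> ring

lemma iB_smul (i : Fin q) (r : ℝ) (φ : Ext q) : iB i (r • φ) = r • iB i φ := by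
  funext s; simp only [iB, Pi.smul_apply, smul_eq_mul]; split_ifs <;> ring

lemma rel_ww (i k : Fin q) (ω : Ext q) : wB i (wB k ω) = -(wB k (wB i ω)) := by
  funext s
  by_cases hik : i = k
  · subst hik
    simp [wB, Finset.notMem_erase]
  simp only [wB, Pi.neg_apply]
  by_cases hi : i ∈ s <;> by_cases hk : k ∈ s
  · have hk' : k ∈ s.erase i := Finset.mem_erase.2 ⟨fun h => hik h.symm, hk⟩
    have hi' : i ∈ s.erase k := Finset.mem_erase.2 ⟨hik, hi⟩
    simp only [if_pos hi, if_pos hk, if_pos hk', if_pos hi']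
    obtain ⟨B, hB1, hB2⟩ : ∃ B, (s.erase i).erase k = B ∧ (s.erase k).erase i = B :=
      ⟨_, rfl, Finset.erase_right_comm.symm⟩
    rw [hB1, hB2]
    have h1 : s.erase i = insert k B := by rw [← hB1, Finset.insert_erase hk']
    have h2 : s.erase k = insert i B := by rw [← hB2, Finset.insert_erase hi']
    have hkB : k ∉ B := hB1 ▸ Finset.notMem_erase _ _
    have hiB : i ∉ B := hB2 ▸ Finset.notMem_erase _ _
    rw [h1, h2, sgn_insert' i k B hkB, sgn_insert' k i B hiB]
    rcases lt_or_gt_of_ne hik with h | h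
    · rw [if_neg (asymm h), if_pos h]; ring
    · rw [if_pos h, if_neg (asymm h)]; ring
  · have h1 : k ∉ s.erase i := fun h => hk (Finset.mem_of_mem_erase h)
    simp [hi, hk, h1]
  · have h1 : i ∉ s.erase k := fun h => hi (Finset.mem_of_mem_erase h)
    simp [hi, hk, h1]
  · simp [hi, hk]

lemma rel_ii (i k : Fin q) (ω : Ext q) : iB i (iB k ω) = -(iB k (iB i ω)) := by
  funext s
  by_cases hik : i = k
  · subst hik
    simp [iB]
  simp only [iB, Pi.neg_apply]
  by_cases hi : i ∈ s <;> by_cases hk : k ∈ s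
  · simp [hi, hk]
  · simp [hi, hk]
  · simp [hi, hk]
  · have hki : i ∉ insert k s := by
      simp only [Finset.mem_insert]; push_neg; exact ⟨hik, hi⟩
    have hik' : k ∉ insert i s := by
      simp only [Finset.mem_insert]; push_neg; exact ⟨fun h => hik h.symm, hk⟩
    simp only [if_neg hi, if_neg hk, if_neg hki, if_neg hik']
    rw [Finset.insert_comm k i, sgn_insert' k i s hi, sgn_insert' i k s hk]
    rcases lt_or_gt_of_ne hik with h | h
    · rw [if_neg (asymm h), if_pos h]; ring
    · rw [if_pos h, if_neg (asymm h)]; ring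

lemma rel_iw (i k : Fin q) (ω : Ext q) :
    iB i (wB k ω) + wB k (iB i ω) = if i = k then ω else 0 := by
  funext s
  by_cases hik : i = k
  · subst hik
    rw [if_pos rfl]
    simp only [Pi.add_apply, iB, wB]
    by_cases hi : i ∈ s
    · rw [if_pos hi, if_pos hi, if_neg (Finset.notMem_erase i s),
        Finset.insert_erase hi]
      linear_combination (ω s) * sgn_sq i (s.erase i)
    · rw [if_neg hi, if_neg hi, if_pos (Finset.mem_insert_self i s),
        Finset.erase_insert hi]
      linear_combination (ω s) * sgn_sq i s
  · rw [if_neg hik]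
    simp only [Pi.add_apply, iB, wB, Pi.zero_apply]
    by_cases hi : i ∈ s <;> by_cases hk : k ∈ s
    · have h1 : i ∈ s.erase k := Finset.mem_erase.2 ⟨hik, hi⟩
      simp [hi, hk, h1]
    · simp [hi, hk]
    · -- i ∉ s, k ∈ s
      have h1 : k ∈ insert i s := Finset.mem_insert_of_mem hk
      have h2 : i ∉ s.erase k := fun h => hi (Finset.mem_of_mem_erase h)
      simp only [if_neg hi, if_pos hk, if_pos h1, if_neg h2]
      rw [Finset.erase_insert_of_ne (fun h => hik h)]
      have e3 : sgn i s = (if k < i then (-1:ℝ) else 1) * sgn i (s.erase k) := by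
        conv_lhs => rw [← Finset.insert_erase hk]
        rw [sgn_insert' i k _ (Finset.notMem_erase _ _)]
      have e4 : sgn k (insert i (s.erase k)) =
          (if i < k then (-1:ℝ) else 1) * sgn k (s.erase k) := sgn_insert' k i _ h2
      rw [e3, e4]
      rcases lt_or_gt_of_ne hik with h | h
      · rw [if_neg (asymm h), if_pos h]; ring
      · rw [if_pos h, if_neg (asymm h)]; ring
    · have h1 : k ∉ insert i s := by
        simp only [Finset.mem_insert]; push_neg; exact ⟨fun h => hik h.symm, hk⟩
      simp [hi, hk, h1]


lemma wB_sub (i : Fin q) (φ ψ : Ext q) : wB i (φ - ψ) = wB i φ - wB i ψ := by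
  funext s; simp only [wB, Pi.sub_apply]; split_ifs <;> ring

lemma iB_sub (i : Fin q) (φ ψ : Ext q) : iB i (φ - ψ) = iB i φ - iB i ψ := by
  funext s; simp only [iB, Pi.sub_apply]; split_ifs <;> ring

/-- Left Clifford multiplication by `e_i`. -/
def cl1 (i : Fin q) (ω : Ext q) : Ext q := wB i ω - iB i ω

lemma clV_eB (i : Fin q) (ω : Ext q) : clV (eB i) ω = cl1 i ω := by
  unfold clV cl1 wV iV eB
  rw [Finset.sum_eq_single i (fun k _ hk => by rw [Pi.single_eq_of_ne hk]; simp)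
      (by simp),
    Finset.sum_eq_single i (fun k _ hk => by rw [Pi.single_eq_of_ne hk]; simp)
      (by simp)]
  simp

lemma cl1_add (i : Fin q) (φ ψ : Ext q) : cl1 i (φ + ψ) = cl1 i φ + cl1 i ψ := by
  unfold cl1; rw [wB_add, iB_add]; abel

lemma cl1_sub (i : Fin q) (φ ψ : Ext q) : cl1 i (φ - ψ) = cl1 i φ - cl1 i ψ := by
  unfold cl1; rw [wB_sub, iB_sub]; abel

lemma cl1_smul (i : Fin q) (r : ℝ) (φ : Ext q) : cl1 i (r • φ) = r • cl1 i φ := by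
  unfold cl1; rw [wB_smul, iB_smul, smul_sub]

lemma cl1_zero (i : Fin q) : cl1 i (0 : Ext q) = 0 := by
  have := cl1_smul i 0 0; simpa using this

lemma cl1_neg (i : Fin q) (φ : Ext q) : cl1 i (-φ) = -(cl1 i φ) := by
  have := cl1_smul i (-1) φ; simpa using this

lemma cl1_sq (i : Fin q) (ω : Ext q) : cl1 i (cl1 i ω) = -ω := by
  have h1 : wB i (wB i ω) = 0 := by
    have h := rel_ww i i ω
    funext s; have := congrFun h s
    simp only [Pi.neg_apply, Pi.zero_apply] at this ⊢; linarith
  have h2 : iB i (iB i ω) = 0 := by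
    have h := rel_ii i i ω
    funext s; have := congrFun h s
    simp only [Pi.neg_apply, Pi.zero_apply] at this ⊢; linarith
  have h3 := rel_iw i i ω
  rw [if_pos rfl] at h3
  unfold cl1
  rw [wB_sub, iB_sub, h1, h2]
  funext s
  have := congrFun h3 s
  simp only [Pi.add_apply, Pi.sub_apply, Pi.zero_apply, Pi.neg_apply] at this ⊢
  linarith

lemma cl1_anticomm {i k : Fin q} (hik : i ≠ k) (ω : Ext q) :
    cl1 i (cl1 k ω) = -(cl1 k (cl1 i ω)) := by
  unfold cl1
  rw [wB_sub, iB_sub, wB_sub, iB_sub]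
  funext s
  have hww := congrFun (rel_ww i k ω) s
  have hii := congrFun (rel_ii i k ω) s
  have hiw := congrFun (rel_iw i k ω) s
  have hwi := congrFun (rel_iw k i ω) s
  rw [if_neg hik] at hiw
  rw [if_neg (Ne.symm hik)] at hwi
  simp only [Pi.add_apply, Pi.sub_apply, Pi.zero_apply, Pi.neg_apply] at *
  linarith

lemma wB_bF {i : Fin q} {T : Finset (Fin q)} (h : i ∉ T) :
    wB i (bF T) = sgn i T • bF (insert i T) := by
  funext s
  simp only [wB, bF, Pi.smul_apply, smul_eq_mul]
  by_cases hi : i ∈ s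
  · rw [if_pos hi]
    by_cases he : s.erase i = T
    · have hs : s = insert i T := by rw [← he, Finset.insert_erase hi]
      rw [if_pos he, if_pos hs, he]
    · have hs : s ≠ insert i T := fun hs => he (by rw [hs, Finset.erase_insert h])
      rw [if_neg he, if_neg hs]; ring
  · have hs : s ≠ insert i T := fun hs => hi (hs ▸ Finset.mem_insert_self i T)
    rw [if_neg hi, if_neg hs]; ring

lemma iB_bF_not {i : Fin q} {T : Finset (Fin q)} (h : i ∉ T) : iB i (bF T) = 0 := by
  funext s
  simp only [iB, bF, Pi.zero_apply]
  split_ifs with h1 h2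
  · rfl
  · exact absurd (h2 ▸ Finset.mem_insert_self i s) h
  · ring

lemma cl1_bF_small {i : Fin q} {T : Finset (Fin q)} (h : ∀ j ∈ T, i < j) :
    cl1 i (bF T) = bF (insert i T) := by
  have hiT : i ∉ T := fun hm => lt_irrefl i (h i hm)
  unfold cl1
  rw [wB_bF hiT, iB_bF_not hiT]
  have hsgn : sgn i T = 1 := by
    unfold sgn
    have he : T.filter (fun j => j < i) = ∅ := by
      rw [Finset.filter_eq_empty_iff]
      exact fun x hx => asymm (h x hx)
    rw [he]; simp
  rw [hsgn, one_smul, sub_zero]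

lemma clB_foldr (s : Finset (Fin q)) (ω : Ext q) :
    clB s ω = (Finset.sort s (· ≤ ·)).foldr (fun i τ => cl1 i τ) ω := by
  unfold clB
  simp only [clV_eB]

lemma foldr_cl1_add (l : List (Fin q)) (φ ψ : Ext q) :
    l.foldr (fun i τ => cl1 i τ) (φ + ψ) =
      l.foldr (fun i τ => cl1 i τ) φ + l.foldr (fun i τ => cl1 i τ) ψ := by
  induction l with
  | nil => rfl
  | cons x l ih => simp only [List.foldr_cons, ih, cl1_add]

lemma foldr_cl1_smul (l : List (Fin q)) (r : ℝ) (φ : Ext q) :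
    l.foldr (fun i τ => cl1 i τ) (r • φ) = r • l.foldr (fun i τ => cl1 i τ) φ := by
  induction l with
  | nil => rfl
  | cons x l ih => simp only [List.foldr_cons, ih, cl1_smul]

lemma cl1_comm_pair {a c : Fin q} (hac : a ≠ c) (x : Fin q) (φ : Ext q) :
    cl1 x (cl1 a (cl1 c φ)) =
      (if x = a ∨ x = c then (-1:ℝ) else 1) • cl1 a (cl1 c (cl1 x φ)) := by
  by_cases hxa : x = a
  · subst hxa
    rw [if_pos (Or.inl rfl), cl1_sq, cl1_anticomm (Ne.symm hac) φ, cl1_neg, cl1_sq]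
    simp
  · by_cases hxc : x = c
    · subst hxc
      rw [if_pos (Or.inr rfl), cl1_anticomm hxa (cl1 x φ), cl1_sq, cl1_neg]
      simp
    · rw [if_neg (by tauto), one_smul, cl1_anticomm hxa (cl1 c φ),
        cl1_anticomm hxc φ, cl1_neg, neg_neg]

lemma foldr_push {a c : Fin q} (hac : a ≠ c) (l : List (Fin q)) (φ : Ext q) :
    l.foldr (fun i τ => cl1 i τ) (cl1 a (cl1 c φ)) =
      ((-1:ℝ) ^ (l.countP (fun i => decide (i = a ∨ i = c)))) •
        cl1 a (cl1 c (l.foldr (fun i τ => cl1 i τ) φ)) := by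
  induction l with
  | nil => simp
  | cons x l ih =>
    simp only [List.foldr_cons, ih, List.countP_cons, cl1_smul]
    rw [cl1_comm_pair hac x]
    rw [smul_smul]
    by_cases hx : x = a ∨ x = c
    · rw [if_pos hx, if_pos (decide_eq_true hx), pow_succ]
    · rw [if_neg hx, if_neg (by simpa using hx), add_zero, mul_one]

lemma foldr_bF (l : List (Fin q)) (hl : l.Pairwise (· < ·)) :
    l.foldr (fun i τ => cl1 i τ) (bF ∅) = bF l.toFinset := by
  induction l with
  | nil => simp
  | cons x l ih =>
    rw [List.foldr_cons, ih hl.of_cons, List.toFinset_cons]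
    exact cl1_bF_small fun j hj => (List.pairwise_cons.mp hl).1 j (List.mem_toFinset.mp hj)

lemma clB_bF_empty (s : Finset (Fin q)) : clB s (bF ∅) = bF s := by
  rw [clB_foldr, foldr_bF _ (List.sortedLT_iff_pairwise.mp (Finset.sortedLT_sort s)), Finset.sort_toFinset]

lemma sort_pair {a c : Fin q} (hac : a < c) :
    Finset.sort ({a, c} : Finset (Fin q)) (· ≤ ·) = [a, c] := by
  rw [show ({a, c} : Finset (Fin q)) = insert a {c} from rfl,
    Finset.sort_insert (h₁ := by simp [le_of_lt hac]) (h₂ := by simp [ne_of_lt hac]),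
    Finset.sort_singleton]

lemma clB_pair {a c : Fin q} (hac : a < c) (ω : Ext q) :
    clB {a, c} ω = cl1 a (cl1 c ω) := by
  rw [clB_foldr, sort_pair hac]
  rfl

lemma bF_pair {a c : Fin q} (hac : a < c) :
    bF ({a, c} : Finset (Fin q)) = cl1 a (cl1 c (bF ∅)) := by
  rw [show cl1 c (bF (∅ : Finset (Fin q))) = bF {c} by
      simpa using cl1_bF_small (i := c) (T := ∅) (by simp)]
  rw [show cl1 a (bF ({c} : Finset (Fin q))) = bF {a, c} by
      simpa using cl1_bF_small (i := a) (T := {c}) (by simpa using hac)]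

lemma expand (g : Ext q) : ∑ s : Finset (Fin q), g s • bF s = g := by
  funext t
  rw [Finset.sum_apply, Finset.sum_eq_single t]
  · simp [bF]
  · intro s _ hst
    simp only [Pi.smul_apply, smul_eq_mul, bF]
    rw [if_neg (fun h => hst h.symm)]
    ring
  · simp


/-- Additive-homomorphism version of `cl1`. -/
def cl1Hom (i : Fin q) : Ext q →+ Ext q where
  toFun := cl1 i
  map_zero' := cl1_zero i
  map_add' := cl1_add i

lemma cl1_sum {α : Type*} (i : Fin q) (t : Finset α) (f : α → Ext q) :
    cl1 i (∑ x ∈ t, f x) = ∑ x ∈ t, cl1 i (f x) :=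
  map_sum (cl1Hom i) f t

lemma clM_bF_left {a c : Fin q} (hac : a < c) (ω : Ext q) :
    clM (bF {a, c}) ω = cl1 a (cl1 c ω) := by
  unfold clM
  rw [Finset.sum_eq_single ({a, c} : Finset (Fin q))]
  · rw [show bF ({a, c} : Finset (Fin q)) {a, c} = 1 from if_pos rfl, one_smul,
      clB_pair hac]
  · intro s _ hst
    rw [show bF ({a, c} : Finset (Fin q)) s = 0 from if_neg hst, zero_smul]
  · simp

lemma clB_bF_pair (a c : Fin q) (hac : a < c) (s : Finset (Fin q)) :
    clB s (bF {a, c}) =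
      ((-1:ℝ) ^ ((s.filter (fun i => i = a ∨ i = c)).card)) • cl1 a (cl1 c (bF s)) := by
  rw [bF_pair hac, clB_foldr, foldr_push (ne_of_lt hac),
    foldr_bF _ (List.sortedLT_iff_pairwise.mp (Finset.sortedLT_sort s)), Finset.sort_toFinset]
  congr 2
  have hn : (Finset.sort s (· ≤ ·)).Nodup := Finset.sort_nodup s _
  rw [List.countP_eq_length_filter, ← List.toFinset_card_of_nodup (hn.filter _),
    List.toFinset_filter, Finset.sort_toFinset]
  congr 1
  ext x
  simp

lemma clM_bF_right {a c : Fin q} (hac : a < c) (ω : Ext q) :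
    clM ω (bF {a, c}) =
      cl1 a (cl1 c (fun s =>
        ((-1:ℝ) ^ ((s.filter (fun i => i = a ∨ i = c)).card)) * ω s)) := by
  unfold clM
  have hterm : ∀ s : Finset (Fin q), ω s • clB s (bF {a, c}) =
      cl1 a (cl1 c ((((-1:ℝ) ^ ((s.filter (fun i => i = a ∨ i = c)).card)) * ω s) • bF s)) := by
    intro s
    rw [clB_bF_pair a c hac, cl1_smul, cl1_smul, smul_smul, mul_comm]
  rw [Finset.sum_congr rfl (fun s _ => hterm s), ← cl1_sum, ← cl1_sum]
  exact congrArg (cl1 a) (congrArg (cl1 c) (expand _))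

lemma pair_vanish {a c : Fin q} (hac : a < c) {ω : Ext q}
    (h : brkt (bF {a, c}) ω = 0) {s : Finset (Fin q)}
    (hs : ¬((a ∈ s) ↔ (c ∈ s))) : ω s = 0 := by
  set ω' : Ext q :=
    fun t => ((-1:ℝ) ^ ((t.filter (fun i => i = a ∨ i = c)).card)) * ω t with hω'
  have hb : cl1 a (cl1 c (ω - ω')) = 0 := by
    have hB := h
    unfold brkt at hB
    rw [clM_bF_left hac, clM_bF_right hac] at hB
    rw [cl1_sub, cl1_sub]
    exact hB
  have hzero : ω - ω' = 0 := by
    have h2 : cl1 a (cl1 c (cl1 a (cl1 c (ω - ω')))) = -(ω - ω') := by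
      rw [cl1_anticomm ((ne_of_lt hac).symm) (cl1 c (ω - ω')), cl1_neg,
        cl1_sq c (ω - ω'), cl1_sq a (-(ω - ω'))]
      simp
    rw [hb, cl1_zero, cl1_zero] at h2
    exact neg_eq_zero.mp h2.symm
  have he := congrFun hzero s
  simp only [Pi.sub_apply, Pi.zero_apply, hω'] at he
  have hcard : (s.filter (fun i => i = a ∨ i = c)).card = 1 := by
    by_cases hain : a ∈ s
    · have hc : c ∉ s := by tauto
      have hfe : s.filter (fun i => i = a ∨ i = c) = {a} := by
        ext x
        simp only [Finset.mem_filter, Finset.mem_singleton]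
        constructor
        · rintro ⟨hx, (rfl | rfl)⟩
          · rfl
          · exact absurd hx hc
        · rintro rfl
          exact ⟨hain, Or.inl rfl⟩
      rw [hfe, Finset.card_singleton]
    · have hc : c ∈ s := by tauto
      have hfe : s.filter (fun i => i = a ∨ i = c) = {c} := by
        ext x
        simp only [Finset.mem_filter, Finset.mem_singleton]
        constructor
        · rintro ⟨hx, (rfl | rfl)⟩
          · exact absurd hx hain
          · rfl
        · rintro rfl
          exact ⟨hc, Or.inr rfl⟩
      rw [hfe, Finset.card_singleton]
  rw [hcard, pow_one] at he
  linarith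

lemma clB_add (s : Finset (Fin q)) (φ ψ : Ext q) : clB s (φ + ψ) = clB s φ + clB s ψ := by
  rw [clB_foldr, clB_foldr, clB_foldr, foldr_cl1_add]

lemma clB_smul (s : Finset (Fin q)) (r : ℝ) (φ : Ext q) : clB s (r • φ) = r • clB s φ := by
  rw [clB_foldr, clB_foldr, foldr_cl1_smul]

lemma brkt_add_left (x y ω : Ext q) : brkt (x + y) ω = brkt x ω + brkt y ω := by
  unfold brkt clM
  simp only [Pi.add_apply, add_smul, clB_add, smul_add, Finset.sum_add_distrib]
  abel

lemma brkt_smul_left (r : ℝ) (x ω : Ext q) : brkt (r • x) ω = r • brkt x ω := by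
  unfold brkt clM
  have h1 : ∑ s : Finset (Fin q), (r • x) s • clB s ω =
      r • ∑ s : Finset (Fin q), x s • clB s ω := by
    rw [Finset.smul_sum]
    exact Finset.sum_congr rfl fun s _ => by rw [Pi.smul_apply, smul_eq_mul, mul_smul]
  have h2 : ∑ s : Finset (Fin q), ω s • clB s (r • x) =
      r • ∑ s : Finset (Fin q), ω s • clB s x := by
    rw [Finset.smul_sum]
    exact Finset.sum_congr rfl fun s _ => by rw [clB_smul, smul_comm]
  rw [h1, h2, smul_sub]

lemma brkt_sub_left (x y ω : Ext q) : brkt (x - y) ω = brkt x ω - brkt y ω := by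
  have h := brkt_add_left (x - y) y ω
  rw [sub_add_cancel] at h
  rw [h]; abel

lemma w2_eB {a c : Fin q} (hac : a < c) : w2 (eB a) (eB c) = bF {a, c} := by
  unfold w2 oneF
  have h1 : (∑ i, eB c i • bF {i} : Ext q) = bF {c} := by
    rw [Finset.sum_eq_single c
      (fun k _ hk => by unfold eB; rw [Pi.single_eq_of_ne hk]; simp) (by simp)]
    unfold eB; simp
  rw [h1]
  have h2 : wV (eB a) (bF {c}) = wB a (bF {c}) := by
    unfold wV eB
    rw [Finset.sum_eq_single a
      (fun k _ hk => by rw [Pi.single_eq_of_ne hk]; simp) (by simp)]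
    simp
  rw [h2, wB_bF (by simp [ne_of_lt hac])]
  have hsg : sgn a ({c} : Finset (Fin q)) = 1 := by
    unfold sgn
    rw [Finset.filter_singleton, if_neg (asymm hac)]
    simp
  rw [hsg, one_smul]


/-- Projection onto the components containing `x`. -/
def Pj (x : Fin q) (ω : Ext q) : Ext q := fun s => if x ∈ s then ω s else 0

lemma wB_iB_same (x : Fin q) (ω : Ext q) : wB x (iB x ω) = Pj x ω := by
  funext s
  simp only [wB, iB, Pj]
  by_cases hx : x ∈ s
  · rw [if_pos hx, if_pos hx, if_neg (Finset.notMem_erase x s), Finset.insert_erase hx]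
    linear_combination (ω s) * sgn_sq x (s.erase x)
  · rw [if_neg hx, if_neg hx]

lemma Pj_iB {x y : Fin q} (hxy : x ≠ y) (ω : Ext q) : Pj x (iB y ω) = iB y (Pj x ω) := by
  funext s
  simp only [Pj, iB]
  have hmem : x ∈ insert y s ↔ x ∈ s := by
    rw [Finset.mem_insert]
    exact ⟨fun h => h.resolve_left hxy, Or.inr⟩
  by_cases hy : y ∈ s <;> by_cases hx : x ∈ s
  · rw [if_pos hx, if_pos hy, if_pos hy]
  · rw [if_neg hx, if_pos hy]
  · rw [if_pos hx, if_neg hy, if_neg hy, if_pos (hmem.mpr hx)]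
  · rw [if_neg hx, if_neg hy, if_neg (fun h => hx (hmem.mp h))]
    ring

lemma iB_iB_zero (x : Fin q) (φ : Ext q) : iB x (iB x φ) = 0 := by
  have h := rel_ii x x φ
  funext s
  have := congrFun h s
  simp only [Pi.neg_apply, Pi.zero_apply] at this ⊢
  linarith

lemma iB_zero (x : Fin q) : iB x (0 : Ext q) = 0 := by
  funext s; simp [iB]

lemma iB_neg (x : Fin q) (φ : Ext q) : iB x (-φ) = -(iB x φ) := by
  have := iB_smul x (-1) φ
  simpa using this

lemma homog_iB (x : Fin q) {n : ℕ} {ω : Ext q} (h : homog n ω) :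
    homog (n - 1) (iB x ω) := by
  intro s hs
  unfold iB
  split_ifs with hx
  · rfl
  · rw [h (insert x s) (by rw [Finset.card_insert_of_notMem hx]; omega)]
    ring

set_option maxHeartbeats 2000000 in
/-- Lemma 4.7 of the paper. If a `p`-form `ω` satisfies
`[θ_{ij}^±, ω] = [ρ_{ij}^±, ω] = 0`, then `ω = e_{2i−1}∧e_{2i}∧e_{2j−1}∧e_{2j}∧ω₁ + ω₂`
where `ω₁, ω₂` are annihilated by contraction with `e_{2i−1}, e_{2i}, e_{2j−1}, e_{2j}`.
(Indices are shifted: paper's `e_k` is the basis vector with `(· : ℕ) = k − 1`.) -/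
theorem statement_12 (q p : ℕ) (i j : ℕ) (hi : 1 ≤ i) (hij : i < j) (hjq : 2 * j ≤ q)
    (a1 a2 c1 c2 : Fin q)
    (ha1 : (a1 : ℕ) = 2 * i - 2) (ha2 : (a2 : ℕ) = 2 * i - 1)
    (hc1 : (c1 : ℕ) = 2 * j - 2) (hc2 : (c2 : ℕ) = 2 * j - 1)
    (θp θm ρp ρm : Ext q)
    (hθp : θp = (Real.sqrt 2)⁻¹ • (w2 (eB a1) (eB c1) + w2 (eB a2) (eB c2)))
    (hθm : θm = (Real.sqrt 2)⁻¹ • (w2 (eB a1) (eB c1) - w2 (eB a2) (eB c2)))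
    (hρp : ρp = (Real.sqrt 2)⁻¹ • (w2 (eB a1) (eB c2) + w2 (eB a2) (eB c1)))
    (hρm : ρm = (Real.sqrt 2)⁻¹ • (w2 (eB a1) (eB c2) - w2 (eB a2) (eB c1)))
    (ω : Ext q) (hω : homog p ω)
    (h1 : brkt θp ω = 0) (h2 : brkt θm ω = 0) (h3 : brkt ρp ω = 0) (h4 : brkt ρm ω = 0) :
    ∃ ω₁ ω₂ : Ext q, homog (p - 4) ω₁ ∧ homog p ω₂ ∧
      iB a1 ω₁ = 0 ∧ iB a2 ω₁ = 0 ∧ iB c1 ω₁ = 0 ∧ iB c2 ω₁ = 0 ∧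
      iB a1 ω₂ = 0 ∧ iB a2 ω₂ = 0 ∧ iB c1 ω₂ = 0 ∧ iB c2 ω₂ = 0 ∧
      ω = wB a1 (wB a2 (wB c1 (wB c2 ω₁))) + ω₂ := by
  -- order relations between the four indices
  have o12 : a1 < a2 := by rw [Fin.lt_def]; omega
  have o13 : a1 < c1 := by rw [Fin.lt_def]; omega
  have o14 : a1 < c2 := by rw [Fin.lt_def]; omega
  have o23 : a2 < c1 := by rw [Fin.lt_def]; omega
  have o24 : a2 < c2 := by rw [Fin.lt_def]; omega
  have o34 : c1 < c2 := by rw [Fin.lt_def]; omega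
  -- the four elementary bracket conditions
  have hsqrt : (0:ℝ) < Real.sqrt 2 := Real.sqrt_pos.mpr (by norm_num)
  have hr : ((Real.sqrt 2)⁻¹ * 2 : ℝ) ≠ 0 := by positivity
  have h13 : brkt (bF {a1, c1}) ω = 0 := by
    have hsum : θp + θm = ((Real.sqrt 2)⁻¹ * 2) • bF {a1, c1} := by
      rw [hθp, hθm, w2_eB o13, w2_eB o24]
      funext s
      simp only [Pi.add_apply, Pi.sub_apply, Pi.smul_apply, smul_eq_mul]
      ring
    have h0 : brkt (θp + θm) ω = 0 := by rw [brkt_add_left, h1, h2, add_zero]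
    rw [hsum, brkt_smul_left] at h0
    exact (smul_eq_zero.mp h0).resolve_left hr
  have h24 : brkt (bF {a2, c2}) ω = 0 := by
    have hsum : θp - θm = ((Real.sqrt 2)⁻¹ * 2) • bF {a2, c2} := by
      rw [hθp, hθm, w2_eB o13, w2_eB o24]
      funext s
      simp only [Pi.add_apply, Pi.sub_apply, Pi.smul_apply, smul_eq_mul]
      ring
    have h0 : brkt (θp - θm) ω = 0 := by rw [brkt_sub_left, h1, h2, sub_zero]
    rw [hsum, brkt_smul_left] at h0
    exact (smul_eq_zero.mp h0).resolve_left hr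
  have h14 : brkt (bF {a1, c2}) ω = 0 := by
    have hsum : ρp + ρm = ((Real.sqrt 2)⁻¹ * 2) • bF {a1, c2} := by
      rw [hρp, hρm, w2_eB o14, w2_eB o23]
      funext s
      simp only [Pi.add_apply, Pi.sub_apply, Pi.smul_apply, smul_eq_mul]
      ring
    have h0 : brkt (ρp + ρm) ω = 0 := by rw [brkt_add_left, h3, h4, add_zero]
    rw [hsum, brkt_smul_left] at h0
    exact (smul_eq_zero.mp h0).resolve_left hr
  have h23 : brkt (bF {a2, c1}) ω = 0 := by
    have hsum : ρp - ρm = ((Real.sqrt 2)⁻¹ * 2) • bF {a2, c1} := by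
      rw [hρp, hρm, w2_eB o14, w2_eB o23]
      funext s
      simp only [Pi.add_apply, Pi.sub_apply, Pi.smul_apply, smul_eq_mul]
      ring
    have h0 : brkt (ρp - ρm) ω = 0 := by rw [brkt_sub_left, h3, h4, sub_zero]
    rw [hsum, brkt_smul_left] at h0
    exact (smul_eq_zero.mp h0).resolve_left hr
  -- mixed components of ω vanish
  have hmix : ∀ s : Finset (Fin q), (a1 ∈ s ∨ a2 ∈ s ∨ c1 ∈ s ∨ c2 ∈ s) →
      ¬(a1 ∈ s ∧ a2 ∈ s ∧ c1 ∈ s ∧ c2 ∈ s) → ω s = 0 := by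
    intro s hin hnall
    by_cases e1 : (a1 ∈ s) ↔ (c1 ∈ s)
    on_goal 2 => exact pair_vanish o13 h13 e1
    by_cases e2 : (a2 ∈ s) ↔ (c2 ∈ s)
    on_goal 2 => exact pair_vanish o24 h24 e2
    by_cases e3 : (a1 ∈ s) ↔ (c2 ∈ s)
    on_goal 2 => exact pair_vanish o14 h14 e3
    by_cases e4 : (a2 ∈ s) ↔ (c1 ∈ s)
    on_goal 2 => exact pair_vanish o23 h23 e4
    exact absurd (by tauto : a1 ∈ s ∧ a2 ∈ s ∧ c1 ∈ s ∧ c2 ∈ s) hnall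
  -- the candidate ω₁
  set ω₁ : Ext q := iB c2 (iB c1 (iB a2 (iB a1 ω))) with hw1
  -- the full wedge part is the projection onto components containing all four indices
  have e_c2 : wB c2 ω₁ = Pj c2 (iB c1 (iB a2 (iB a1 ω))) := by
    rw [hw1, wB_iB_same]
  have e_c1 : wB c1 (wB c2 ω₁) = Pj c1 (Pj c2 (iB a2 (iB a1 ω))) := by
    rw [e_c2, Pj_iB (ne_of_lt o34).symm, wB_iB_same]
  have e_a2 : wB a2 (wB c1 (wB c2 ω₁)) = Pj a2 (Pj c1 (Pj c2 (iB a1 ω))) := by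
    rw [e_c1, Pj_iB (ne_of_lt o24).symm, Pj_iB (ne_of_lt o23).symm, wB_iB_same]
  have e_a1 : wB a1 (wB a2 (wB c1 (wB c2 ω₁))) = Pj a1 (Pj a2 (Pj c1 (Pj c2 ω))) := by
    rw [e_a2, Pj_iB (ne_of_lt o14).symm, Pj_iB (ne_of_lt o13).symm,
      Pj_iB (ne_of_lt o12).symm, wB_iB_same]
  have hwf : ∀ t, wB a1 (wB a2 (wB c1 (wB c2 ω₁))) t =
      if a1 ∈ t ∧ a2 ∈ t ∧ c1 ∈ t ∧ c2 ∈ t then ω t else 0 := by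
    intro t
    rw [e_a1]
    simp only [Pj]
    split_ifs <;> first | rfl | tauto
  -- ω₂ components vanish as needed
  have hsub : ∀ x, (x = a1 ∨ x = a2 ∨ x = c1 ∨ x = c2) → ∀ t, x ∈ t →
      (ω - wB a1 (wB a2 (wB c1 (wB c2 ω₁)))) t = 0 := by
    intro x hx t hxt
    rw [Pi.sub_apply, hwf t]
    by_cases hall : a1 ∈ t ∧ a2 ∈ t ∧ c1 ∈ t ∧ c2 ∈ t
    · rw [if_pos hall]; ring
    · rw [if_neg hall, hmix t (by rcases hx with rfl | rfl | rfl | rfl <;> tauto) hall]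
      ring
  have hiB₂ : ∀ x, (x = a1 ∨ x = a2 ∨ x = c1 ∨ x = c2) →
      iB x (ω - wB a1 (wB a2 (wB c1 (wB c2 ω₁)))) = 0 := by
    intro x hx
    funext s
    simp only [iB, Pi.zero_apply]
    split_ifs with h
    · rfl
    · rw [hsub x hx (insert x s) (Finset.mem_insert_self x s)]; ring
  refine ⟨ω₁, ω - wB a1 (wB a2 (wB c1 (wB c2 ω₁))), ?_, ?_, ?_, ?_, ?_, ?_, ?_, ?_, ?_, ?_, ?_⟩
  · -- homog (p - 4) ω₁
    have hh : homog (p - 1 - 1 - 1 - 1) ω₁ := by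
      rw [hw1]
      exact homog_iB _ (homog_iB _ (homog_iB _ (homog_iB _ hω)))
    rwa [show p - 1 - 1 - 1 - 1 = p - 4 from by omega] at hh
  · -- homog p ω₂
    intro s hs
    rw [Pi.sub_apply, hwf s, hω s hs]
    split_ifs <;> norm_num
  · rw [hw1, rel_ii a1 c2, rel_ii a1 c1, rel_ii a1 a2, iB_iB_zero a1 ω]
    simp only [iB_zero, iB_neg, neg_zero]
  · rw [hw1, rel_ii a2 c2, rel_ii a2 c1, iB_iB_zero a2 (iB a1 ω)]
    simp only [iB_zero, iB_neg, neg_zero]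
  · rw [hw1, rel_ii c1 c2, iB_iB_zero c1 (iB a2 (iB a1 ω))]
    simp only [iB_zero, iB_neg, neg_zero]
  · rw [hw1]
    exact iB_iB_zero c2 _
  · exact hiB₂ a1 (Or.inl rfl)
  · exact hiB₂ a2 (Or.inr (Or.inl rfl))
  · exact hiB₂ c1 (Or.inr (Or.inr (Or.inl rfl)))
  · exact hiB₂ c2 (Or.inr (Or.inr (Or.inr rfl)))
  · abel

end
end Paper
end
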